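/- Let G be a connected graph in which every block is locally connected. Then every vertex cover of G containing all cut vertices of G induces a connected subgraph of G. -/

import Mathlib

namespace EVC

open SimpleGraph

variable {V : Type*}

/-- `S` is a vertex cover of `G`. -/
def IsVC (G : SimpleGraph V) (S : Set V) : Prop :=
  ∀ ⦃u v : V⦄, G.Adj u v → u ∈ S ∨ v ∈ S

/-- The minimum vertex cover number of `G`. -/
noncomputable def mvc (G : SimpleGraph V) : ℕ :=
  sInf {k | ∃ S : Set V, IsVC G S ∧ S.ncard = k}

/-- The minimum size of a vertex cover of `G` containing all vertices of `U`. -/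
noncomputable def mvcOn (G : SimpleGraph V) (U : Set V) : ℕ :=
  sInf {k | ∃ S : Set V, IsVC G S ∧ U ⊆ S ∧ S.ncard = k}

/-- Configuration `S'` is obtained from configuration `S` by a legal move of the guards
defending an attack on the edge `uv`: each guard stays or moves to an adjacent vertex
(at most one guard per vertex), and some guard moves across the attacked edge `uv`. -/
def Defends (G : SimpleGraph V) (S S' : Set V) (u v : V) : Prop :=
  ∃ f : V → V, Set.BijOn f S S' ∧ (∀ w ∈ S, f w = w ∨ G.Adj w (f w)) ∧
    ((u ∈ S ∧ f u = v) ∨ (v ∈ S ∧ f v = u))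

/-- `C` is an eternal vertex cover class of `G` with `k` guards, each configuration being a
vertex cover of size `k` containing `U`: from each configuration, every attack on an edge
can be defended by a legal move to another configuration in `C`. -/
def IsEvcClassOn (G : SimpleGraph V) (U : Set V) (k : ℕ) (C : Set (Set V)) : Prop :=
  C.Nonempty ∧ (∀ S ∈ C, IsVC G S ∧ U ⊆ S ∧ S.ncard = k) ∧
    ∀ S ∈ C, ∀ u v : V, G.Adj u v → ∃ S' ∈ C, Defends G S S' u v

/-- An eternal vertex cover class with no constraint on occupied vertices. -/
def IsEvcClass (G : SimpleGraph V) (k : ℕ) (C : Set (Set V)) : Prop :=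
  IsEvcClassOn G ∅ k C

/-- `evc_U(G)` : the minimum `k` admitting an eternal vertex cover class all of whose
configurations contain `U`. -/
noncomputable def evcOn (G : SimpleGraph V) (U : Set V) : ℕ :=
  sInf {k | ∃ C : Set (Set V), IsEvcClassOn G U k C}

/-- The eternal vertex cover number of `G`. -/
noncomputable def evc (G : SimpleGraph V) : ℕ := evcOn G ∅

/-- `x` is a cut vertex of the connected graph `G`. -/
def IsCutVertex (G : SimpleGraph V) (x : V) : Prop :=
  G.Connected ∧ ¬ (G.induce {v : V | v ≠ x}).Connected

/-- The set of cut vertices of `G`. -/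
def cutVertices (G : SimpleGraph V) : Set V := {x | IsCutVertex G x}

/-- `G` is locally connected: every open neighborhood induces a connected subgraph. -/
def LocallyConnected (G : SimpleGraph V) : Prop :=
  ∀ v : V, (G.induce (G.neighborSet v)).Connected

end EVC

open EVC SimpleGraph

/-- A block of `G`: a maximal set of vertices inducing a connected subgraph with no cut
vertex (this covers maximal biconnected components, bridges and isolated vertices). -/
def IsBlock {V : Type*} (G : SimpleGraph V) (Bs : Set V) : Prop :=
  (G.induce Bs).Connected ∧ (∀ x, ¬ IsCutVertex (G.induce Bs) x) ∧
    ∀ Cs : Set V, Bs ⊆ Cs → (G.induce Cs).Connected →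
      (∀ x, ¬ IsCutVertex (G.induce Cs) x) → Bs = Cs

section BlockAux

open SimpleGraph EVC

variable {V : Type*} {G : SimpleGraph V}

/-- Walk-based characterization of connectivity of an induced subgraph. -/
def WConn (G : SimpleGraph V) (A : Set V) : Prop :=
  A.Nonempty ∧ ∀ a ∈ A, ∀ b ∈ A, ∃ p : G.Walk a b, ∀ z ∈ p.support, z ∈ A

lemma reachable_induce_of_walk {A : Set V} {a b : V} (p : G.Walk a b)
    (hp : ∀ z ∈ p.support, z ∈ A) (ha : a ∈ A) (hb : b ∈ A) :
    (G.induce A).Reachable ⟨a, ha⟩ ⟨b, hb⟩ := by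
  induction p with
  | nil => exact Reachable.refl _
  | @cons a c b h q ih =>
    have hc : c ∈ A := hp c (by simp)
    exact Reachable.trans
      (SimpleGraph.Adj.reachable (show (G.induce A).Adj ⟨a, ha⟩ ⟨c, hc⟩ from h))
      (ih (fun z hz => hp z (by simp [hz])) hc hb)

lemma wconn_iff {A : Set V} : WConn G A ↔ (G.induce A).Connected := by
  constructor
  · rintro ⟨⟨a0, ha0⟩, hw⟩
    rw [connected_iff]
    refine ⟨?_, ⟨⟨a0, ha0⟩⟩⟩
    rintro ⟨x, hx⟩ ⟨y, hy⟩
    obtain ⟨p, hp⟩ := hw x hx y hy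
    exact reachable_induce_of_walk p hp hx hy
  · intro hc
    obtain ⟨⟨a0, ha0⟩⟩ := hc.nonempty
    refine ⟨⟨a0, ha0⟩, ?_⟩
    intro a ha b hb
    obtain ⟨p⟩ := hc.preconnected ⟨a, ha⟩ ⟨b, hb⟩
    refine ⟨p.map ⟨Subtype.val, fun h => h⟩, ?_⟩
    intro z hz
    rw [Walk.support_map] at hz
    obtain ⟨⟨z', hz'⟩, _, rfl⟩ := List.mem_map.mp hz
    exact hz'

/-- Transfer of connectivity for doubly induced subgraphs. -/
lemma induce_induce_connected_iff {A : Set V} (P : Set ↑A) :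
    ((G.induce A).induce P).Connected ↔ (G.induce (Subtype.val '' P)).Connected := by
  have h1 : ∀ y : ↑(Subtype.val '' P), ∃ (h : (y : V) ∈ A), (⟨(y : V), h⟩ : ↑A) ∈ P := by
    rintro ⟨y, ⟨⟨zv, hz⟩, hzP, rfl⟩⟩
    exact ⟨hz, hzP⟩
  refine Iso.connected_iff (⟨⟨fun x => ⟨((x : ↑A) : V), ⟨x.1, x.2, rfl⟩⟩,
      fun y => ⟨⟨(y : V), (h1 y).choose⟩, (h1 y).choose_spec⟩, fun _ => rfl, fun _ => rfl⟩,
      ?_⟩ : (G.induce A).induce P ≃g G.induce (Subtype.val '' P))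
  rintro ⟨⟨x, hxA⟩, hxP⟩ ⟨⟨y, hyA⟩, hyP⟩
  exact Iff.rfl

lemma image_ne (A : Set V) (x : ↑A) :
    Subtype.val '' {v : ↑A | v ≠ x} = A \ {(x : V)} := by
  ext v
  constructor
  · rintro ⟨u, hu, rfl⟩
    exact ⟨u.2, fun h => hu (Subtype.ext h)⟩
  · rintro ⟨hvA, hvx⟩
    exact ⟨⟨v, hvA⟩, fun h => hvx (congrArg Subtype.val h), rfl⟩

lemma not_isCutVertex_of {A : Set V} (h : ∀ x ∈ A, (G.induce (A \ {x})).Connected) :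
    ∀ x, ¬ IsCutVertex (G.induce A) x := by
  rintro x ⟨hc, hnc⟩
  apply hnc
  rw [show {v : ↑A | v ≠ x} = ({v : ↑A | v ≠ x} : Set ↑A) from rfl,
    induce_induce_connected_iff, image_ne]
  exact h ↑x x.2

lemma connected_diff_of_noCut {A : Set V} (hA : (G.induce A).Connected)
    (h : ∀ x, ¬ IsCutVertex (G.induce A) x) : ∀ x ∈ A, (G.induce (A \ {x})).Connected := by
  intro x hx
  have h2 : ((G.induce A).induce {v : ↑A | v ≠ ⟨x, hx⟩}).Connected := by
    by_contra hQ
    exact h ⟨x, hx⟩ ⟨hA, hQ⟩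
  rwa [induce_induce_connected_iff, image_ne] at h2

/-- A "good" set: induces a connected subgraph with no cut vertex. -/
def Good (G : SimpleGraph V) (A : Set V) : Prop :=
  (G.induce A).Connected ∧ ∀ x, ¬ IsCutVertex (G.induce A) x

lemma wconn_singleton (a : V) : WConn G {a} := by
  refine ⟨⟨a, rfl⟩, ?_⟩
  intro x hx y hy
  rw [Set.mem_singleton_iff] at hx hy
  subst hx; subst hy
  exact ⟨Walk.nil, by simp⟩

lemma good_pair {u v : V} (h : G.Adj u v) : Good G {u, v} := by
  constructor
  · refine wconn_iff.mp ⟨⟨u, by simp⟩, ?_⟩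
    intro a ha b hb
    simp only [Set.mem_insert_iff, Set.mem_singleton_iff] at ha hb
    have huv : ∃ p : G.Walk u v, ∀ z ∈ p.support, z ∈ ({u, v} : Set V) :=
      ⟨Walk.cons h Walk.nil, by intro z hz; simp at hz; rcases hz with h1 | h1 <;> simp [h1]⟩
    obtain ⟨p0, hp0⟩ := huv
    rcases ha with rfl | rfl <;> rcases hb with rfl | rfl
    · exact ⟨Walk.nil, by simp⟩
    · exact ⟨p0, hp0⟩
    · exact ⟨p0.reverse, by intro z hz; rw [Walk.support_reverse, List.mem_reverse] at hz; exact hp0 z hz⟩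
    · exact ⟨Walk.nil, by simp⟩
  · apply not_isCutVertex_of
    intro x hx
    have hne : u ≠ v := h.ne
    simp only [Set.mem_insert_iff, Set.mem_singleton_iff] at hx
    rcases hx with rfl | rfl
    · rw [show ({x, v} : Set V) \ {x} = {v} by
        ext z
        simp only [Set.mem_diff, Set.mem_insert_iff, Set.mem_singleton_iff]
        constructor
        · rintro ⟨rfl | rfl, hz⟩
          · exact absurd rfl hz
          · rfl
        · rintro rfl
          exact ⟨Or.inr rfl, fun h => hne h.symm⟩]
      exact wconn_iff.mp (wconn_singleton v)
    · rw [show ({u, x} : Set V) \ {x} = {u} by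
        ext z
        simp only [Set.mem_diff, Set.mem_insert_iff, Set.mem_singleton_iff]
        constructor
        · rintro ⟨rfl | rfl, hz⟩
          · rfl
          · exact absurd rfl hz
        · rintro rfl
          exact ⟨Or.inl rfl, hne⟩]
      exact wconn_iff.mp (wconn_singleton u)

lemma wconn_union_common {A B : Set V} (hA : WConn G A) (hB : WConn G B) {c : V}
    (hcA : c ∈ A) (hcB : c ∈ B) : WConn G (A ∪ B) := by
  have key : ∀ x ∈ A ∪ B, ∃ p : G.Walk x c, ∀ z ∈ p.support, z ∈ A ∪ B := by
    intro x hx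
    rcases hx with hx | hx
    · obtain ⟨p, hp⟩ := hA.2 x hx c hcA
      exact ⟨p, fun z hz => Or.inl (hp z hz)⟩
    · obtain ⟨p, hp⟩ := hB.2 x hx c hcB
      exact ⟨p, fun z hz => Or.inr (hp z hz)⟩
  refine ⟨⟨c, Or.inl hcA⟩, ?_⟩
  intro a ha b hb
  obtain ⟨pa, hpa⟩ := key a ha
  obtain ⟨pb, hpb⟩ := key b hb
  refine ⟨pa.append pb.reverse, ?_⟩
  intro z hz
  rcases (Walk.mem_support_append_iff _ _).mp hz with h1 | h1
  · exact hpa z h1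
  · rw [Walk.support_reverse, List.mem_reverse] at h1
    exact hpb z h1

lemma good_union {A B : Set V} (hA : Good G A) (hB : Good G B) {a b : V}
    (haA : a ∈ A) (haB : a ∈ B) (hbA : b ∈ A) (hbB : b ∈ B) (hab : a ≠ b) :
    Good G (A ∪ B) := by
  have hwA : WConn G A := wconn_iff.mpr hA.1
  have hwB : WConn G B := wconn_iff.mpr hB.1
  constructor
  · exact wconn_iff.mp (wconn_union_common hwA hwB haA haB)
  · apply not_isCutVertex_of
    intro x hx
    rw [Set.union_diff_distrib]
    have hdA : WConn G (A \ {x}) := by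
      by_cases hxA : x ∈ A
      · exact wconn_iff.mpr (connected_diff_of_noCut hA.1 hA.2 x hxA)
      · rw [Set.diff_singleton_eq_self hxA]; exact hwA
    have hdB : WConn G (B \ {x}) := by
      by_cases hxB : x ∈ B
      · exact wconn_iff.mpr (connected_diff_of_noCut hB.1 hB.2 x hxB)
      · rw [Set.diff_singleton_eq_self hxB]; exact hwB
    obtain ⟨c, hcA, hcB, hcx⟩ : ∃ c, c ∈ A ∧ c ∈ B ∧ c ≠ x := by
      by_cases hax : a = x
      · exact ⟨b, hbA, hbB, fun h => hab (hax ▸ h ▸ rfl)⟩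
      · exact ⟨a, haA, haB, hax⟩
    exact wconn_iff.mp (wconn_union_common hdA hdB ⟨hcA, hcx⟩ ⟨hcB, hcx⟩)

lemma exists_walk_mem [DecidableEq V] {s t : V} (p : G.Walk s t) {a b : V}
    (ha : a ∈ p.support) (hb : b ∈ p.support) :
    ∃ q : G.Walk a b, ∀ z ∈ q.support, z ∈ p.support := by
  refine ⟨(p.takeUntil a ha).reverse.append (p.takeUntil b hb), ?_⟩
  intro z hz
  rcases (Walk.mem_support_append_iff _ _).mp hz with h | h
  · rw [Walk.support_reverse, List.mem_reverse] at h
    exact p.support_takeUntil_subset ha h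
  · exact p.support_takeUntil_subset hb h

lemma exists_walk_avoid_end [DecidableEq V] {s e : V} {p : G.Walk s e} (hp : p.IsPath)
    {y : V} (hy : y ∈ p.support) (hye : y ≠ e) :
    ∃ q : G.Walk s y, ∀ z ∈ q.support, z ∈ p.support ∧ z ≠ e := by
  have hspec := p.take_spec hy
  have hnodup := hp.support_nodup
  rw [← hspec, Walk.support_append] at hnodup
  have he2 : e ∈ (p.dropUntil y hy).support.tail := by
    have h3 : e ∈ (p.dropUntil y hy).support := Walk.end_mem_support _
    rw [Walk.support_eq_cons] at h3
    rcases List.mem_cons.mp h3 with h4 | h4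
    · exact absurd h4.symm hye
    · exact h4
  refine ⟨p.takeUntil y hy, fun z hz => ⟨p.support_takeUntil_subset hy hz, fun hze => ?_⟩⟩
  exact (List.disjoint_of_nodup_append hnodup) (hze ▸ hz) he2

lemma exists_walk_avoid [DecidableEq V] {s t : V} {p : G.Walk s t} (hp : p.IsPath)
    (x : V) {y : V} (hy : y ∈ p.support) (hyx : y ≠ x) :
    (∃ q : G.Walk s y, ∀ z ∈ q.support, z ∈ p.support ∧ z ≠ x) ∨
    (∃ q : G.Walk t y, ∀ z ∈ q.support, z ∈ p.support ∧ z ≠ x) := by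
  by_cases hx : x ∈ p.support
  · have hspec := p.take_spec hx
    have hy' : y ∈ (p.takeUntil x hx).support ∨ y ∈ (p.dropUntil x hx).support := by
      rw [← hspec] at hy
      exact (Walk.mem_support_append_iff _ _).mp hy
    rcases hy' with h1 | h2
    · left
      obtain ⟨q, hq⟩ := exists_walk_avoid_end (hp.takeUntil hx) h1 hyx
      refine ⟨q, fun z hz => ⟨?_, (hq z hz).2⟩⟩
      rw [← hspec]
      exact (Walk.mem_support_append_iff _ _).mpr (Or.inl (hq z hz).1)
    · right
      have hp2 : (p.dropUntil x hx).reverse.IsPath := (hp.dropUntil hx).reverse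
      have h2' : y ∈ (p.dropUntil x hx).reverse.support := by
        rw [Walk.support_reverse]; exact List.mem_reverse.mpr h2
      obtain ⟨q, hq⟩ := exists_walk_avoid_end hp2 h2' hyx
      refine ⟨q, fun z hz => ⟨?_, (hq z hz).2⟩⟩
      have h5 := (hq z hz).1
      rw [Walk.support_reverse, List.mem_reverse] at h5
      rw [← hspec]
      exact (Walk.mem_support_append_iff _ _).mpr (Or.inr h5)
  · left
    exact ⟨p.takeUntil y hy, fun z hz =>
      ⟨p.support_takeUntil_subset hy hz,
       fun h => hx (h ▸ p.support_takeUntil_subset hy hz)⟩⟩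

end BlockAux
section BlockAux2

open SimpleGraph EVC

variable {V : Type*} {G : SimpleGraph V}

lemma good_cycle [DecidableEq V] {w u0 u : V} (h0 : G.Adj w u0) (hu : G.Adj w u)
    (_h00 : u0 ≠ u) {p : G.Walk u0 u} (hp : p.IsPath) (hw : w ∉ p.support) :
    Good G (insert w {z | z ∈ p.support}) := by
  set C : Set V := insert w {z | z ∈ p.support} with hC
  have hsub : ∀ z ∈ p.support, z ∈ C := fun z hz => Or.inr hz
  have aux : ∀ y ∈ C, ∃ q : G.Walk w y, ∀ z ∈ q.support, z ∈ C := by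
    intro y hy
    rcases hy with rfl | hy
    · exact ⟨Walk.nil, by simp [hC]⟩
    · refine ⟨Walk.cons h0 (p.takeUntil y hy), ?_⟩
      intro z hz
      rw [Walk.support_cons] at hz
      rcases List.mem_cons.mp hz with rfl | hz
      · exact Or.inl rfl
      · exact hsub z (p.support_takeUntil_subset hy hz)
  constructor
  · refine wconn_iff.mp ⟨⟨w, Or.inl rfl⟩, ?_⟩
    intro a ha b hb
    obtain ⟨pa, hpa⟩ := aux a ha
    obtain ⟨pb, hpb⟩ := aux b hb
    refine ⟨pa.reverse.append pb, ?_⟩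
    intro z hz
    rcases (Walk.mem_support_append_iff _ _).mp hz with h1 | h1
    · rw [Walk.support_reverse, List.mem_reverse] at h1
      exact hpa z h1
    · exact hpb z h1
  · apply not_isCutVertex_of
    intro x hx
    rcases hx with rfl | hx
    · -- removing w
      have hCw : C \ {x} = {z | z ∈ p.support} := by
        ext z
        simp only [hC, Set.mem_diff, Set.mem_insert_iff, Set.mem_singleton_iff,
          Set.mem_setOf_eq]
        constructor
        · rintro ⟨rfl | hz, hzx⟩
          · exact absurd rfl hzx
          · exact hz
        · intro hz
          exact ⟨Or.inr hz, fun h => hw (h ▸ hz)⟩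
      rw [hCw]
      refine wconn_iff.mp ⟨⟨u0, Walk.start_mem_support p⟩, ?_⟩
      intro a ha b hb
      exact exists_walk_mem p ha hb
    · -- removing x ∈ p.support
      have hwx : w ≠ x := fun h => hw (h ▸ hx)
      have aux2 : ∀ y ∈ C \ {x}, ∃ q : G.Walk w y, ∀ z ∈ q.support, z ∈ C \ {x} := by
        rintro y ⟨hy, hyx⟩
        rw [Set.mem_singleton_iff] at hyx
        rcases hy with rfl | hy
        · refine ⟨Walk.nil, ?_⟩
          intro z hz
          rw [Walk.support_nil, List.mem_singleton] at hz
          subst hz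
          exact ⟨Or.inl rfl, hwx⟩
        · rcases exists_walk_avoid hp x hy hyx with ⟨q, hq⟩ | ⟨q, hq⟩
          · refine ⟨Walk.cons h0 q, ?_⟩
            intro z hz
            rw [Walk.support_cons] at hz
            rcases List.mem_cons.mp hz with rfl | hz
            · exact ⟨Or.inl rfl, hwx⟩
            · exact ⟨hsub z (hq z hz).1, (hq z hz).2⟩
          · refine ⟨Walk.cons hu q, ?_⟩
            intro z hz
            rw [Walk.support_cons] at hz
            rcases List.mem_cons.mp hz with rfl | hz
            · exact ⟨Or.inl rfl, hwx⟩
            · exact ⟨hsub z (hq z hz).1, (hq z hz).2⟩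
      refine wconn_iff.mp ⟨⟨w, Or.inl rfl, hwx⟩, ?_⟩
      intro a ha b hb
      obtain ⟨pa, hpa⟩ := aux2 a ha
      obtain ⟨pb, hpb⟩ := aux2 b hb
      refine ⟨pa.reverse.append pb, ?_⟩
      intro z hz
      rcases (Walk.mem_support_append_iff _ _).mp hz with h1 | h1
      · rw [Walk.support_reverse, List.mem_reverse] at h1
        exact hpa z h1
      · exact hpb z h1

lemma exists_block [Finite V] (hG : G.Connected) {w : V} (hw : ¬ IsCutVertex G w)
    {u0 : V} (h0 : G.Adj w u0) :
    ∃ B : Set V, IsBlock G B ∧ w ∈ B ∧ ∀ u, G.Adj w u → u ∈ B := by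
  classical
  set T : Set (Set V) := {A | Good G A ∧ w ∈ A ∧ u0 ∈ A} with hT
  have hTne : T.Nonempty := ⟨{w, u0}, good_pair h0, Or.inl rfl, Or.inr rfl⟩
  obtain ⟨B, hBT, hBmax⟩ := Set.Finite.exists_maximalFor Set.ncard T T.toFinite hTne
  have hmax : ∀ C, B ⊆ C → Good G C → B = C := by
    intro C hBC hC
    have hCT : C ∈ T := ⟨hC, hBC hBT.2.1, hBC hBT.2.2⟩
    have hle : B.ncard ≤ C.ncard := Set.ncard_le_ncard hBC C.toFinite
    exact Set.eq_of_subset_of_ncard_le hBC (hBmax hCT hle) C.toFinite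
  refine ⟨B, ⟨hBT.1.1, hBT.1.2, fun Cs hsub hconn hnocut => hmax Cs hsub ⟨hconn, hnocut⟩⟩,
    hBT.2.1, ?_⟩
  intro u hu
  by_cases huu : u = u0
  · exact huu ▸ hBT.2.2
  · have hconn' : (G.induce {v : V | v ≠ w}).Connected := by
      by_contra hnc
      exact hw ⟨hG, hnc⟩
    obtain ⟨_, hwc⟩ := wconn_iff.mpr hconn'
    obtain ⟨p0, hp0⟩ := hwc u0 h0.ne' u hu.ne'
    set p : G.Walk u0 u := p0.bypass with hpdef
    have hp : p.IsPath := p0.bypass_isPath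
    have hwp : w ∉ p.support := fun h =>
      (hp0 w (p0.support_bypass_subset h)) rfl
    have hgc : Good G (insert w {z | z ∈ p.support}) :=
      good_cycle h0 hu (fun h => huu h.symm) hp hwp
    have hgu : Good G (B ∪ insert w {z | z ∈ p.support}) :=
      good_union hBT.1 hgc hBT.2.1 (Or.inl rfl) hBT.2.2
        (Or.inr p.start_mem_support) h0.ne
    have heq : B = B ∪ insert w {z | z ∈ p.support} :=
      hmax _ Set.subset_union_left hgu
    rw [heq]
    exact Or.inr (Or.inr p.end_mem_support)

lemma image_neighborSet {B : Set V} {w : V} (hwB : w ∈ B) (hN : ∀ u, G.Adj w u → u ∈ B) :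
    Subtype.val '' ((G.induce B).neighborSet ⟨w, hwB⟩) = G.neighborSet w := by
  ext v
  constructor
  · rintro ⟨⟨v', hv'⟩, hadj, rfl⟩
    exact hadj
  · intro hadj
    exact ⟨⟨v, hN v hadj⟩, hadj, rfl⟩

lemma walk_in_cover {S : Set V}
    (hH : ∀ c, c ∉ S → (∀ e, G.Adj c e → e ∈ S) ∧ WConn G (G.neighborSet c)) :
    ∀ n {a b : V}, a ∈ S → b ∈ S → ∀ p : G.Walk a b, p.length ≤ n →
      ∃ q : G.Walk a b, ∀ z ∈ q.support, z ∈ S := by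
  intro n
  induction n with
  | zero =>
    intro a b ha hb p hp
    cases p with
    | nil => exact ⟨Walk.nil, by simp; exact ha⟩
    | cons h q => simp [Walk.length_cons] at hp
  | succ n ih =>
    intro a b ha hb p hp
    cases p with
    | nil => exact ⟨Walk.nil, by simp; exact ha⟩
    | @cons _ c _ h q =>
      by_cases hc : c ∈ S
      · obtain ⟨q', hq'⟩ := ih hc hb q (by
          rw [Walk.length_cons] at hp; omega)
        refine ⟨Walk.cons h q', ?_⟩
        intro z hz
        rw [Walk.support_cons] at hz
        rcases List.mem_cons.mp hz with rfl | hz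
        · exact ha
        · exact hq' z hz
      · have hcb : c ≠ b := fun e => hc (e ▸ hb)
        cases q with
        | nil => exact absurd rfl hcb
        | @cons _ d _ h2 q2 =>
          have hd : d ∈ S := (hH c hc).1 _ h2
          have haN : a ∈ G.neighborSet c := h.symm
          have hdN : d ∈ G.neighborSet c := h2
          obtain ⟨r, hr⟩ := (hH c hc).2.2 a haN d hdN
          obtain ⟨q', hq'⟩ := ih hd hb q2 (by
            simp only [Walk.length_cons] at hp; omega)
          refine ⟨r.append q', ?_⟩
          intro z hz
          rcases (Walk.mem_support_append_iff _ _).mp hz with h3 | h3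
          · exact (hH c hc).1 _ (hr z h3)
          · exact hq' z h3

end BlockAux2
/-- If every block of a connected graph `G` is locally connected, then every
vertex cover of `G` containing all cut vertices induces a connected subgraph. -/
theorem vc_with_cutVertices_connected_of_blocks_locally_connected {V : Type*} [Finite V]
    (G : SimpleGraph V) (hconn : G.Connected)
    (hblocks : ∀ Bs : Set V, IsBlock G Bs → LocallyConnected (G.induce Bs)) :
    ∀ S : Set V, IsVC G S → cutVertices G ⊆ S → (G.induce S).Connected := by
  classical
  intro S hVC hcut
  have hH : ∀ c, c ∉ S → (∀ e, G.Adj c e → e ∈ S) ∧ WConn G (G.neighborSet c) := by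
    intro c hc
    have hNS : ∀ e, G.Adj c e → e ∈ S := fun e he => (hVC he).resolve_left hc
    refine ⟨hNS, ?_⟩
    have hex : ∃ u0, G.Adj c u0 := by
      by_cases hall : ∀ v : V, v = c
      · exfalso
        apply hc
        apply hcut
        refine ⟨hconn, fun hcon => ?_⟩
        obtain ⟨⟨v, hv⟩⟩ := hcon.nonempty
        exact hv (hall v)
      · push_neg at hall
        obtain ⟨v, hv⟩ := hall
        obtain ⟨p⟩ := hconn.preconnected c v
        cases p with
        | nil => exact absurd rfl hv
        | cons h q => exact ⟨_, h⟩
    obtain ⟨u0, h0⟩ := hex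
    have hwncut : ¬ IsCutVertex G c := fun h => hc (hcut h)
    obtain ⟨B, hB, hcB, hNB⟩ := exists_block hconn hwncut h0
    have hloc := hblocks B hB ⟨c, hcB⟩
    rw [show (G.induce B).neighborSet ⟨c, hcB⟩ =
        (((G.induce B).neighborSet ⟨c, hcB⟩ : Set ↑B)) from rfl,
      induce_induce_connected_iff, image_neighborSet hcB hNB] at hloc
    exact wconn_iff.mpr hloc
  have hSne : S.Nonempty := by
    obtain ⟨v⟩ := hconn.nonempty
    by_cases hv : v ∈ S
    · exact ⟨v, hv⟩
    · obtain ⟨⟨u, hu⟩, _⟩ := (hH v hv).2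
      exact ⟨u, (hH v hv).1 u hu⟩
  refine wconn_iff.mp ⟨hSne, ?_⟩
  intro a ha b hb
  obtain ⟨p⟩ := hconn.preconnected a b
  exact walk_in_cover hH p.length ha hb p le_rfl
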